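/- For a repressible operon with bursting, f(x) = (1+xⁿ)/(1+Δxⁿ), Δ > 1: if 0 < κ_b < 1 the equation (1/κ_b)(x/b + 1) = f(x) has no positive solution, and if κ_b > 1 it has exactly one positive solution. -/

import Mathlib

/-- Repressible operon with bursting: (1/κ_b)(x/b+1) = (1+xⁿ)/(1+Δxⁿ) has no positive
solution for 0 < κ_b < 1, and exactly one positive solution for κ_b > 1. -/
theorem repressible_bursting_modes
    (b Δ κb : ℝ) (n : ℕ) (hb : 0 < b) (hΔ : 1 < Δ) (hκ : 0 < κb) (hn : 1 ≤ n) :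
    (κb < 1 → ¬∃ x : ℝ, 0 < x ∧
        (1 / κb) * (x / b + 1) = (1 + x ^ n) / (1 + Δ * x ^ n)) ∧
    (1 < κb → ∃! x : ℝ, 0 < x ∧
        (1 / κb) * (x / b + 1) = (1 + x ^ n) / (1 + Δ * x ^ n)) := by
  have hn0 : n ≠ 0 := by omega
  have hden : ∀ x : ℝ, 0 ≤ x → 0 < 1 + Δ * x ^ n := by
    intro x hx
    have : 0 ≤ x ^ n := pow_nonneg hx n
    nlinarith
  -- f ≤ 1 on nonnegatives
  have hfle : ∀ x : ℝ, 0 ≤ x → (1 + x ^ n) / (1 + Δ * x ^ n) ≤ 1 := by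
    intro x hx
    rw [div_le_one (hden x hx)]
    have : 0 ≤ x ^ n := pow_nonneg hx n
    nlinarith
  -- f strictly decreasing on nonnegatives
  have hfdec : ∀ x y : ℝ, 0 ≤ x → x < y →
      (1 + y ^ n) / (1 + Δ * y ^ n) < (1 + x ^ n) / (1 + Δ * x ^ n) := by
    intro x y hx hxy
    have hy : 0 ≤ y := le_of_lt (lt_of_le_of_lt hx hxy)
    rw [div_lt_div_iff₀ (hden y hy) (hden x hx)]
    have hpow : x ^ n < y ^ n := pow_lt_pow_left₀ hxy hx hn0
    nlinarith
  constructor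
  · -- no solution when κb < 1
    rintro hκ1 ⟨x, hx, heq⟩
    have h1 : (1 + x ^ n) / (1 + Δ * x ^ n) ≤ 1 := hfle x hx.le
    have h2 : 1 < (1 / κb) * (x / b + 1) := by
      have hxb : 0 < x / b := div_pos hx hb
      have : 1 < 1 / κb := by
        rw [lt_div_iff₀ hκ]; linarith
      nlinarith
    linarith [heq ▸ h2]
  · -- unique solution when κb > 1
    intro hκ1
    set g : ℝ → ℝ := fun x => (1 / κb) * (x / b + 1) - (1 + x ^ n) / (1 + Δ * x ^ n)
      with hg
    set M : ℝ := b * κb with hM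
    have hMpos : 0 < M := mul_pos hb hκ
    have hcont : ContinuousOn g (Set.Icc 0 M) := by
      apply ContinuousOn.sub
      · fun_prop
      · apply ContinuousOn.div (by fun_prop) (by fun_prop)
        intro x hx
        exact ne_of_gt (hden x hx.1)
    have hg0 : g 0 < 0 := by
      simp only [hg, zero_pow hn0]
      have : (1:ℝ) / κb < 1 := by
        rw [div_lt_one hκ]; exact hκ1
      simp only [zero_div, zero_add, mul_zero, add_zero, mul_one, div_one]
      linarith
    have hgM : 0 < g M := by
      have hfM : (1 + M ^ n) / (1 + Δ * M ^ n) ≤ 1 := hfle M hMpos.le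
      have hMb : M / b = κb := by
        field_simp [hM]
        exact hM
      simp only [hg, hMb]
      have hκinv : 0 < 1 / κb := by positivity
      have h1 : (1 / κb) * (κb + 1) = 1 + 1 / κb := by
        field_simp
      linarith [h1, hfM, hκinv]
    obtain ⟨y, hy, hgy⟩ : ∃ y ∈ Set.Icc (0:ℝ) M, g y = 0 := by
      have h0mem : (0:ℝ) ∈ Set.Icc (g 0) (g M) := ⟨hg0.le, hgM.le⟩
      obtain ⟨y, hy, hgy⟩ := intermediate_value_Icc hMpos.le hcont h0mem
      exact ⟨y, hy, hgy⟩
    have hypos : 0 < y := by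
      rcases lt_or_eq_of_le hy.1 with h | h
      · exact h
      · exfalso; rw [← h] at hgy; linarith
    refine ⟨y, ⟨hypos, by simpa [hg, sub_eq_zero] using hgy⟩, ?_⟩
    rintro z ⟨hz, hzeq⟩
    have hyeq : (1 / κb) * (y / b + 1) = (1 + y ^ n) / (1 + Δ * y ^ n) := by
      simpa [hg, sub_eq_zero] using hgy
    by_contra hne
    have hL : ∀ u v : ℝ, 0 ≤ u → u < v →
        (1 / κb) * (u / b + 1) < (1 / κb) * (v / b + 1) := by
      intro u v hu huv
      have h1 : u / b < v / b := by
        apply div_lt_div_of_pos_right huv hb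
      have h2 : 0 < 1 / κb := by positivity
      nlinarith
    rcases lt_trichotomy z y with h | h | h
    · linarith [hL z y hz.le h, hfdec z y hz.le h, hyeq, hzeq]
    · exact hne h
    · linarith [hL y z hypos.le h, hfdec y z hypos.le h, hyeq, hzeq]
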